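/- For ρ, μ > 0, ν > 0, w ∈ ℝ, and t > 0: ∫_0^t y^{μ−1} M^ν_{ρ,μ}(w y^ρ) (t−y)^{ν−1} dy = Γ(ν) t^{ν+μ−1} M^ν_{ρ,μ+ν}(w t^ρ), where M^c_{a,b} is the Prabhakar (generalized Mittag-Leffler) function. -/

import Mathlib

open Real MeasureTheory

section aux

lemma betaIntegrable {p q t : ℝ} (hp : 0 < p) (hq : 0 < q) (ht : 0 < t) :
    IntervalIntegrable (fun y : ℝ => y ^ (p - 1) * (t - y) ^ (q - 1)) volume 0 t := by
  have half : ∀ {u v : ℝ}, 0 < u → 0 < v →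
      IntervalIntegrable (fun y : ℝ => y ^ (u - 1) * (t - y) ^ (v - 1)) volume 0 (t/2) := by
    intro u v hu hv
    apply IntervalIntegrable.mul_continuousOn
    · exact intervalIntegral.intervalIntegrable_rpow' (by linarith)
    · apply ContinuousOn.rpow_const
      · exact (continuous_const.sub continuous_id).continuousOn
      · intro x hx
        rw [Set.uIcc_of_le (by positivity : (0:ℝ) ≤ t/2)] at hx
        exact Or.inl (ne_of_gt (by linarith [hx.2]))
  refine (half hp hq).trans ?_
  have h2 := ((half hq hp).comp_sub_left t).symm
  simp only [sub_zero, sub_sub_cancel] at h2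
  have he : (t : ℝ) - t / 2 = t / 2 := by ring
  rw [he] at h2
  have : (fun x : ℝ => (t - x) ^ (q - 1) * x ^ (p - 1))
      = fun y : ℝ => y ^ (p - 1) * (t - y) ^ (q - 1) := by
    funext x; rw [mul_comm]
  rwa [this] at h2

lemma betaEval {p q t : ℝ} (hp : 0 < p) (hq : 0 < q) (ht : 0 < t) :
    ∫ y in (0:ℝ)..t, y ^ (p - 1) * (t - y) ^ (q - 1)
      = Real.Gamma p * Real.Gamma q / Real.Gamma (p + q) * t ^ (p + q - 1) := by
  have hC : ∫ x in (0:ℝ)..t, (x : ℂ) ^ ((p:ℂ) - 1) * ((t:ℂ) - x) ^ ((q:ℂ) - 1)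
      = (t:ℂ) ^ ((p:ℂ) + q - 1) * Complex.betaIntegral p q :=
    Complex.betaIntegral_scaled p q ht
  have hcongr : ∀ x ∈ Set.uIcc (0:ℝ) t,
      ((↑(x ^ (p - 1) * (t - x) ^ (q - 1)) : ℂ))
        = (x : ℂ) ^ ((p:ℂ) - 1) * ((t:ℂ) - x) ^ ((q:ℂ) - 1) := by
    intro x hx
    rw [Set.uIcc_of_le ht.le] at hx
    rw [Complex.ofReal_mul, Complex.ofReal_cpow hx.1,
      Complex.ofReal_cpow (by linarith [hx.2] : (0:ℝ) ≤ t - x)]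
    push_cast
    ring_nf
  have hof : ((↑(∫ y in (0:ℝ)..t, y ^ (p - 1) * (t - y) ^ (q - 1)) : ℂ))
      = (t:ℂ) ^ ((p:ℂ) + q - 1) * Complex.betaIntegral p q := by
    rw [← intervalIntegral.integral_ofReal, intervalIntegral.integral_congr hcongr, hC]
  have hbeta : Complex.betaIntegral p q
      = ((Real.Gamma p * Real.Gamma q / Real.Gamma (p + q) : ℝ) : ℂ) := by
    have h1 := Complex.Gamma_mul_Gamma_eq_betaIntegral
      (s := (p:ℂ)) (t := (q:ℂ)) (by simpa using hp) (by simpa using hq)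
    have h2 : ((p:ℂ) + q) = ((p + q : ℝ) : ℂ) := by push_cast; ring
    rw [h2, Complex.Gamma_ofReal, Complex.Gamma_ofReal, Complex.Gamma_ofReal] at h1
    have h3 : (Real.Gamma (p+q) : ℂ) ≠ 0 := by
      simpa using (Real.Gamma_pos_of_pos (by linarith)).ne'
    field_simp at h1 ⊢
    rw [Complex.ofReal_div, Complex.ofReal_mul, eq_div_iff h3]; linear_combination -h1
  rw [hbeta] at hof
  have htp : ((t:ℂ) ^ ((p:ℂ) + q - 1)) = ((t ^ (p + q - 1) : ℝ) : ℂ) := by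
    rw [Complex.ofReal_cpow ht.le]; push_cast; ring_nf
  rw [htp, ← Complex.ofReal_mul] at hof
  have := Complex.ofReal_injective hof
  rw [this]; ring

lemma summable_of_step {f : ℕ → ℝ} (hf0 : ∀ n, 0 ≤ f n) {K N : ℕ} (hK : 0 < K)
    (h : ∀ n, N ≤ n → f (n + K) ≤ (1/2) * f n) : Summable f := by
  rw [← summable_nat_add_iff N]
  set g : ℕ → ℝ := fun n => f (n + N) with hg_def
  have hg0 : ∀ n, 0 ≤ g n := fun n => hf0 _
  have hg : ∀ n, g (n + K) ≤ (1/2) * g n := by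
    intro n
    have := h (n + N) (Nat.le_add_left N n)
    simpa [hg_def, add_right_comm] using this
  set r : ℝ := (1/2 : ℝ) ^ ((K:ℝ)⁻¹) with hr_def
  have hr0 : 0 < r := Real.rpow_pos_of_pos (by norm_num) _
  have hr1 : r < 1 := Real.rpow_lt_one (by norm_num) (by norm_num) (by positivity)
  have hrK : r ^ K = 1/2 := by
    rw [hr_def, ← Real.rpow_natCast ((1/2:ℝ) ^ ((K:ℝ)⁻¹)) K, ← Real.rpow_mul (by norm_num),
      inv_mul_cancel₀ (by exact_mod_cast hK.ne'), Real.rpow_one]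
  set S : ℝ := ∑ i ∈ Finset.range K, g i with hS_def
  have hS0 : 0 ≤ S := Finset.sum_nonneg fun i _ => hg0 i
  have key : ∀ n, g n ≤ (2 * S) * r ^ n := by
    intro n
    induction n using Nat.strong_induction_on with
    | _ n ih =>
      by_cases hn : n < K
      · have h1 : g n ≤ S := Finset.single_le_sum (fun i _ => hg0 i) (Finset.mem_range.mpr hn)
        have h2 : r ^ K ≤ r ^ n := pow_le_pow_of_le_one hr0.le hr1.le hn.le
        calc g n ≤ S := h1
          _ = (2 * S) * (1/2) := by ring
          _ = (2 * S) * r ^ K := by rw [hrK]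
          _ ≤ (2 * S) * r ^ n := by
              apply mul_le_mul_of_nonneg_left h2 (by linarith)
      · push_neg at hn
        obtain ⟨m, rfl⟩ : ∃ m, n = m + K := ⟨n - K, (Nat.sub_add_cancel hn).symm⟩
        have hm : m < m + K := Nat.lt_add_of_pos_right hK
        calc g (m + K) ≤ (1/2) * g m := hg m
          _ ≤ (1/2) * ((2 * S) * r ^ m) := by
              apply mul_le_mul_of_nonneg_left (ih m hm) (by norm_num)
          _ = (2 * S) * r ^ m * r ^ K := by rw [hrK]; ring
          _ = (2 * S) * r ^ (m + K) := by rw [pow_add]; ring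
  exact Summable.of_nonneg_of_le hg0 key
    ((summable_geometric_of_lt_one hr0.le hr1).mul_left _)

lemma summable_geom_gamma {ρ b : ℝ} (y : ℝ) (hρ : 0 < ρ) (hb : 0 < b) (hy : 0 ≤ y) :
    Summable (fun n : ℕ => y ^ n / Real.Gamma (ρ * n + b)) := by
  obtain ⟨K, hK⟩ := exists_nat_ge (1/ρ)
  have hK1 : 1 ≤ ρ * K := by
    rw [div_le_iff₀ hρ] at hK
    linarith [hK, mul_comm ρ (K:ℝ)]
  have hKpos : 0 < K := by
    by_contra hc
    push_neg at hc
    interval_cases K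
    simp at hK1; linarith
  obtain ⟨N, hN⟩ := exists_nat_ge ((max 1 (2 * y ^ K)) / ρ)
  have hNs : ∀ n : ℕ, N ≤ n → max 1 (2 * y ^ K) ≤ ρ * n + b := by
    intro n hn
    have h1 : (N:ℝ) ≤ n := by exact_mod_cast hn
    have := (div_le_iff₀ hρ).mp hN
    nlinarith
  apply summable_of_step (K := K) (N := N)
  · intro n
    have := Real.Gamma_pos_of_pos (show (0:ℝ) < ρ * n + b by positivity)
    positivity
  · exact hKpos
  · intro n hn
    have hs1 : (1:ℝ) ≤ ρ * n + b := le_trans (le_max_left _ _) (hNs n hn)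
    have hs2 : 2 * y ^ K ≤ ρ * n + b := le_trans (le_max_right _ _) (hNs n hn)
    have hGpos : 0 < Real.Gamma (ρ * n + b) :=
      Real.Gamma_pos_of_pos (by positivity)
    have hGpos' : 0 < Real.Gamma (ρ * ↑(n + K) + b) :=
      Real.Gamma_pos_of_pos (by positivity)
    have hmono : (ρ * n + b) * Real.Gamma (ρ * n + b) ≤ Real.Gamma (ρ * ↑(n + K) + b) := by
      rw [← Real.Gamma_add_one (by positivity)]
      apply Real.Gamma_strictMonoOn_Ici.monotoneOn
      · simp only [Set.mem_Ici]; linarith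
      · simp only [Set.mem_Ici]; push_cast; nlinarith
      · push_cast; nlinarith
    have hyK : 0 ≤ y ^ n := by positivity
    rw [div_le_iff₀ hGpos', pow_add]
    have step1 : y ^ n * y ^ K ≤ y ^ n * ((1/2) * (ρ * n + b)) := by
      apply mul_le_mul_of_nonneg_left _ hyK
      linarith
    calc y ^ n * y ^ K ≤ y ^ n * ((1/2) * (ρ * n + b)) := step1
      _ = (1/2) * (y ^ n / Real.Gamma (ρ * n + b)) * ((ρ * n + b) * Real.Gamma (ρ * n + b)) := by
          field_simp
      _ ≤ (1/2) * (y ^ n / Real.Gamma (ρ * n + b)) * Real.Gamma (ρ * ↑(n + K) + b) := by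
          apply mul_le_mul_of_nonneg_left hmono
          positivity

lemma poch_nonneg {ν : ℝ} (hν : 0 ≤ ν) (n : ℕ) : 0 ≤ (ascPochhammer ℝ n).eval ν := by
  induction n with
  | zero => simp
  | succ n ih =>
    rw [ascPochhammer_succ_eval]
    exact mul_nonneg ih (by positivity)

lemma poch_le {ν : ℝ} (hν : 0 ≤ ν) (n : ℕ) :
    (ascPochhammer ℝ n).eval ν ≤ (1 + ν) ^ n * (n.factorial : ℝ) := by
  induction n with
  | zero => simp
  | succ n ih =>
    rw [ascPochhammer_succ_eval]
    have h1 : ν + (n:ℝ) ≤ (1 + ν) * ((n:ℝ) + 1) := by nlinarith [Nat.cast_nonneg (α := ℝ) n]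
    have h2 : (ascPochhammer ℝ n).eval ν * (ν + n)
        ≤ ((1 + ν) ^ n * (n.factorial : ℝ)) * ((1 + ν) * ((n:ℝ) + 1)) := by
      apply mul_le_mul ih h1 (by positivity) (by positivity)
    calc (ascPochhammer ℝ n).eval ν * (ν + n)
        ≤ ((1 + ν) ^ n * (n.factorial : ℝ)) * ((1 + ν) * ((n:ℝ) + 1)) := h2
      _ = (1 + ν) ^ (n + 1) * (((n:ℝ) + 1) * (n.factorial : ℝ)) := by ring
      _ = (1 + ν) ^ (n + 1) * ((n+1).factorial : ℝ) := by
          rw [Nat.factorial_succ]; push_cast; ring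

end aux

/-- Prabhakar generalized Mittag-Leffler function `M^c_{a,b}(z)`. -/
noncomputable def prabhakar (a b c z : ℝ) : ℝ :=
  ∑' n : ℕ, (ascPochhammer ℝ n).eval c * z ^ n / (Real.Gamma (a * n + b) * Nat.factorial n)

theorem prabhakar_convolution (ρ μ ν w t : ℝ) (hρ : 0 < ρ) (hμ : 0 < μ)
    (hν : 0 < ν) (ht : 0 < t) :
    ∫ y in (0 : ℝ)..t, y ^ (μ - 1) * prabhakar ρ μ ν (w * y ^ ρ) * (t - y) ^ (ν - 1)
      = Real.Gamma ν * t ^ (ν + μ - 1) * prabhakar ρ (μ + ν) ν (w * t ^ ρ) := by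
  have hμν : 0 < μ + ν := by linarith
  set c : ℕ → ℝ := fun n =>
    (ascPochhammer ℝ n).eval ν * w ^ n / (Real.Gamma (ρ * n + μ) * n.factorial) with hc
  set F : ℕ → ℝ → ℝ := fun n y =>
    c n * (y ^ (ρ * n + μ - 1) * (t - y) ^ (ν - 1)) with hF
  have hp : ∀ n : ℕ, (0:ℝ) < ρ * n + μ := fun n => by positivity
  have hGp : ∀ n : ℕ, 0 < Real.Gamma (ρ * n + μ) := fun n => Real.Gamma_pos_of_pos (hp n)
  have hGq : ∀ n : ℕ, 0 < Real.Gamma (ρ * n + μ + ν) :=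
    fun n => Real.Gamma_pos_of_pos (by linarith [hp n])
  -- integrability
  have hIntOn : ∀ n : ℕ, IntegrableOn (F n) (Set.Ioc 0 t) volume := by
    intro n
    rw [← intervalIntegrable_iff_integrableOn_Ioc_of_le ht.le]
    exact (betaIntegrable (hp n) hν ht).const_mul (c n)
  -- value of the integral of each term
  have hval : ∀ n : ℕ, (∫ y in Set.Ioc (0:ℝ) t, F n y)
      = c n * (Real.Gamma (ρ * n + μ) * Real.Gamma ν / Real.Gamma (ρ * n + μ + ν)
          * t ^ (ρ * n + μ + ν - 1)) := by
    intro n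
    rw [← intervalIntegral.integral_of_le ht.le]
    simp only [hF]
    rw [intervalIntegral.integral_const_mul, betaEval (hp n) hν ht]
  -- norm integrals
  have hnorm : ∀ n : ℕ, (∫ y in Set.Ioc (0:ℝ) t, ‖F n y‖)
      = |c n| * (Real.Gamma (ρ * n + μ) * Real.Gamma ν / Real.Gamma (ρ * n + μ + ν)
          * t ^ (ρ * n + μ + ν - 1)) := by
    intro n
    have hcg : ∀ y ∈ Set.Ioc (0:ℝ) t,
        ‖F n y‖ = |c n| * (y ^ (ρ * n + μ - 1) * (t - y) ^ (ν - 1)) := by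
      intro y hy
      simp only [hF, Real.norm_eq_abs, abs_mul]
      congr 1
      rw [abs_of_nonneg (Real.rpow_nonneg hy.1.le _), abs_of_nonneg
        (Real.rpow_nonneg (by linarith [hy.2] : (0:ℝ) ≤ t - y) _)]
    rw [setIntegral_congr_fun measurableSet_Ioc hcg, integral_const_mul,
      ← intervalIntegral.integral_of_le ht.le, betaEval (hp n) hν ht]
  -- summability of the norm integrals
  have hsum : Summable (fun n : ℕ => ∫ y in Set.Ioc (0:ℝ) t, ‖F n y‖) := by
    have base := (summable_geom_gamma (ρ := ρ) (b := μ + ν)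
      ((1 + ν) * |w| * t ^ ρ) hρ hμν (by positivity)).mul_left
      (Real.Gamma ν * t ^ (μ + ν - 1))
    apply Summable.of_nonneg_of_le
      (fun n => integral_nonneg (fun y => norm_nonneg _)) (fun n => ?_) base
    rw [hnorm n]
    have hGarg : ρ * (n:ℝ) + (μ + ν) = ρ * n + μ + ν := by ring
    have htexp : t ^ (ρ * (n:ℝ) + μ + ν - 1) = (t ^ ρ) ^ n * t ^ (μ + ν - 1) := by
      rw [show ρ * (n:ℝ) + μ + ν - 1 = ρ * (n:ℝ) + (μ + ν - 1) by ring,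
        Real.rpow_add ht, Real.rpow_mul ht.le, Real.rpow_natCast]
    have hcabs : |c n| = (ascPochhammer ℝ n).eval ν * |w| ^ n
        / (Real.Gamma (ρ * n + μ) * n.factorial) := by
      rw [hc]
      rw [abs_div, abs_mul, abs_of_nonneg (poch_nonneg hν.le n), abs_pow,
        abs_of_pos (by positivity : (0:ℝ) < Real.Gamma (ρ * n + μ) * n.factorial)]
    have hfac : (0:ℝ) < n.factorial := by exact_mod_cast n.factorial_pos
    have e1 : |c n| * (Real.Gamma (ρ * n + μ) * Real.Gamma ν / Real.Gamma (ρ * n + μ + ν)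
          * t ^ (ρ * n + μ + ν - 1))
        = (Real.Gamma ν * t ^ (μ + ν - 1) * (|w| * t ^ ρ) ^ n / Real.Gamma (ρ * n + μ + ν))
          * ((ascPochhammer ℝ n).eval ν / n.factorial) := by
      rw [hcabs, htexp, mul_pow]
      field_simp
    have e2 : Real.Gamma ν * t ^ (μ + ν - 1)
          * (((1 + ν) * |w| * t ^ ρ) ^ n / Real.Gamma (ρ * n + (μ + ν)))
        = (Real.Gamma ν * t ^ (μ + ν - 1) * (|w| * t ^ ρ) ^ n / Real.Gamma (ρ * n + μ + ν))
          * (1 + ν) ^ n := by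
      rw [hGarg, mul_pow, mul_pow]
      ring
    rw [e1, e2]
    apply mul_le_mul_of_nonneg_left _ (by positivity)
    rw [div_le_iff₀ hfac]
    exact poch_le hν.le n
  -- pointwise identity on Ioc
  have hpt : ∀ y ∈ Set.Ioc (0:ℝ) t,
      y ^ (μ - 1) * prabhakar ρ μ ν (w * y ^ ρ) * (t - y) ^ (ν - 1) = ∑' n, F n y := by
    intro y hy
    rw [prabhakar, ← tsum_mul_left, ← tsum_mul_right]
    apply tsum_congr
    intro n
    simp only [hF, hc]
    have hyρ : (w * y ^ ρ) ^ n = w ^ n * y ^ (ρ * (n:ℝ)) := by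
      rw [mul_pow, Real.rpow_mul hy.1.le, Real.rpow_natCast]
    have hyexp : y ^ (ρ * (n:ℝ) + μ - 1) = y ^ (ρ * (n:ℝ)) * y ^ (μ - 1) := by
      rw [show ρ * (n:ℝ) + μ - 1 = ρ * (n:ℝ) + (μ - 1) by ring, Real.rpow_add hy.1]
    rw [hyρ, hyexp]
    field_simp
  -- put everything together
  rw [intervalIntegral.integral_of_le ht.le, setIntegral_congr_fun measurableSet_Ioc hpt,
    ← MeasureTheory.integral_tsum_of_summable_integral_norm hIntOn hsum]
  rw [prabhakar, ← tsum_mul_left]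
  apply tsum_congr
  intro n
  rw [hval n]
  have hGarg : ρ * (n:ℝ) + (μ + ν) = ρ * n + μ + ν := by ring
  have htexp : t ^ (ρ * (n:ℝ) + μ + ν - 1) = (t ^ ρ) ^ n * t ^ (ν + μ - 1) := by
    rw [show ρ * (n:ℝ) + μ + ν - 1 = ρ * (n:ℝ) + (ν + μ - 1) by ring,
      Real.rpow_add ht, Real.rpow_mul ht.le, Real.rpow_natCast]
  rw [hc, hGarg, htexp, mul_pow]
  have hfac : (0:ℝ) < n.factorial := by exact_mod_cast n.factorial_pos
  field_simp
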